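/- Let (Z_t)_{t≥0} be a nonnegative real sequence satisfying Z_{t+1} ≤ (1 - a/(t+1))·Z_t + C·w_t/(t+1)², where a > 0, C > 0, and Σ_t w_t/(t+1)² < ∞ with w_t ≥ 0. Then Z_t → 0. -/

import Mathlib

open Filter

/-- Deterministic comparison lemma: if `Z_{t+1} ≤ (1 - a/(t+1))·Z_t + C·w_t/(t+1)²`
with `Z_t ≥ 0`, `w_t ≥ 0`, `a > 0`, `C > 0` and `Σ_t w_t/(t+1)² < ∞`, then `Z_t → 0`. -/
theorem comparison_lemma_to_zero
    (Z w : ℕ → ℝ) (a C : ℝ) (ha : 0 < a) (hC : 0 < C)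
    (hZ : ∀ t, 0 ≤ Z t) (hw : ∀ t, 0 ≤ w t)
    (hrec : ∀ t : ℕ, Z (t + 1) ≤ (1 - a / ((t : ℝ) + 1)) * Z t + C * w t / ((t : ℝ) + 1) ^ 2)
    (hsum : Summable (fun t : ℕ => w t / ((t : ℝ) + 1) ^ 2)) :
    Tendsto Z atTop (nhds 0) := by
  -- error terms
  set e : ℕ → ℝ := fun t => C * w t / ((t : ℝ) + 1) ^ 2 with he_def
  have he0 : ∀ t, 0 ≤ e t := fun t => by
    have h1 : (0:ℝ) < ((t:ℝ)+1)^2 := by positivity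
    exact div_nonneg (mul_nonneg hC.le (hw t)) h1.le
  have he : Summable e := by
    have := hsum.mul_left C
    convert this using 2 with t
    rfl
    simp [he_def, mul_div_assoc]
  rw [NormedAddCommGroup.tendsto_nhds_zero]
  intro ε hε
  -- choose T₀ with small tail and a ≤ T₀ + 1
  have h1 : ∀ᶠ i in atTop, (∑' k, e (k + i)) < ε/2 :=
    (tendsto_sum_nat_add e).eventually (gt_mem_nhds (half_pos hε))
  have h2 : ∀ᶠ i : ℕ in atTop, a ≤ (i:ℝ) + 1 := by
    filter_upwards [eventually_ge_atTop ⌈a⌉₊] with i hi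
    calc a ≤ (⌈a⌉₊ : ℝ) := Nat.le_ceil a
    _ ≤ (i:ℝ) := by exact_mod_cast hi
    _ ≤ (i:ℝ) + 1 := by linarith
  obtain ⟨T, hTtail, hTa⟩ := (h1.and h2).exists
  -- factors are in [0,1]
  have hfac : ∀ n : ℕ, 0 ≤ 1 - a / ((T:ℝ) + n + 1) ∧ 1 - a / ((T:ℝ) + n + 1) ≤ 1 := by
    intro n
    have hpos : (0:ℝ) < (T:ℝ) + n + 1 := by positivity
    constructor
    · have : a / ((T:ℝ) + n + 1) ≤ 1 := by
        rw [div_le_one hpos]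
        have : (0:ℝ) ≤ (n:ℝ) := Nat.cast_nonneg n
        linarith
      linarith
    · have : 0 ≤ a / ((T:ℝ) + n + 1) := div_nonneg ha.le hpos.le
      linarith
  set P : ℕ → ℝ := fun n => ∏ k ∈ Finset.range n, (1 - a / ((T:ℝ) + k + 1)) with hP_def
  have hP0 : ∀ n, 0 ≤ P n := fun n =>
    Finset.prod_nonneg fun k _ => (hfac k).1
  -- main induction
  have key : ∀ n : ℕ, Z (T + n) ≤ Z T * P n + ∑ k ∈ Finset.range n, e (k + T) := by
    intro n
    induction n with
    | zero => simp [hP_def]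
    | succ n ih =>
      have hrec' := hrec (T + n)
      have hc : ((T + n : ℕ) : ℝ) + 1 = (T:ℝ) + n + 1 := by push_cast; ring
      rw [hc] at hrec'
      have hfn := hfac n
      have hsum0 : 0 ≤ ∑ k ∈ Finset.range n, e (k + T) :=
        Finset.sum_nonneg fun k _ => he0 _
      have hen : e (T + n) = e (n + T) := by rw [add_comm]
      calc Z (T + (n+1)) = Z ((T + n) + 1) := by ring_nf
        _ ≤ (1 - a / ((T:ℝ) + n + 1)) * Z (T + n) + e (T + n) := by simp only [he_def]; rw [hc]; exact hrec'
        _ ≤ (1 - a / ((T:ℝ) + n + 1)) * (Z T * P n + ∑ k ∈ Finset.range n, e (k + T))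
              + e (T + n) := by
            gcongr
            exact hfn.1
        _ ≤ Z T * P n * (1 - a / ((T:ℝ) + n + 1)) + (∑ k ∈ Finset.range n, e (k + T))
              + e (n + T) := by
            rw [hen]
            have h1 : (1 - a / ((T:ℝ) + n + 1)) * (∑ k ∈ Finset.range n, e (k + T))
                ≤ ∑ k ∈ Finset.range n, e (k + T) := by
              nlinarith [hfn.1, hfn.2, hsum0]
            nlinarith [hfn.1, hfn.2, hsum0]
        _ = Z T * P (n+1) + ∑ k ∈ Finset.range (n+1), e (k + T) := by
            simp only [hP_def, Finset.prod_range_succ, Finset.sum_range_succ]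
            ring
  -- tail sum bound
  have htail : ∀ n, ∑ k ∈ Finset.range n, e (k + T) < ε/2 := by
    intro n
    have hsummT : Summable (fun k => e (k + T)) := (summable_nat_add_iff T).2 he
    calc ∑ k ∈ Finset.range n, e (k + T) ≤ ∑' k, e (k + T) :=
          Summable.sum_le_tsum _ (fun k _ => he0 _) hsummT
      _ < ε/2 := hTtail
  -- P n → 0
  have hPlim : Tendsto P atTop (nhds 0) := by
    apply squeeze_zero hP0 (g := fun n => Real.exp (-(a * ∑ k ∈ Finset.range n, 1 / ((T:ℝ) + k + 1))))
    · intro n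
      have h1 : P n ≤ ∏ k ∈ Finset.range n, Real.exp (-(a / ((T:ℝ) + k + 1))) := by
        apply Finset.prod_le_prod (fun k _ => (hfac k).1)
        intro k _
        have := Real.add_one_le_exp (-(a / ((T:ℝ) + k + 1)))
        linarith
      rw [← Real.exp_sum] at h1
      convert h1 using 2
      rw [Finset.mul_sum, ← Finset.sum_neg_distrib]
      exact Finset.sum_congr rfl fun k _ => by rw [mul_one_div]
    · -- exp(-(a * S n)) → 0 since S n → ∞
      have hS : Tendsto (fun n => ∑ k ∈ Finset.range n, 1 / ((T:ℝ) + k + 1)) atTop atTop := by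
        have hlow : Tendsto (fun n => (1/((T:ℝ)+1)) * ∑ k ∈ Finset.range n, 1 / ((k:ℝ) + 1)) atTop atTop :=
          (Real.tendsto_sum_range_one_div_nat_succ_atTop).const_mul_atTop (by positivity)
        apply tendsto_atTop_mono _ hlow
        intro n
        rw [Finset.mul_sum]
        apply Finset.sum_le_sum
        intro k _
        rw [div_mul_div_comm, one_mul]
        apply one_div_le_one_div_of_le (by positivity)
        have h1 : (0:ℝ) ≤ T := Nat.cast_nonneg T
        have h2 : (0:ℝ) ≤ k := Nat.cast_nonneg k
        nlinarith
      have : Tendsto (fun n => -(a * ∑ k ∈ Finset.range n, 1 / ((T:ℝ) + k + 1))) atTop atBot :=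
        tendsto_neg_atTop_atBot.comp (hS.const_mul_atTop ha)
      exact Real.tendsto_exp_atBot.comp this
  -- conclude
  have hZP : Tendsto (fun n => Z T * P n) atTop (nhds 0) := by
    simpa using hPlim.const_mul (Z T)
  have hev : ∀ᶠ n in atTop, Z T * P n < ε/2 :=
    (hZP.eventually (gt_mem_nhds (half_pos hε)))
  obtain ⟨N, hN⟩ := eventually_atTop.1 hev
  rw [eventually_atTop]
  refine ⟨T + N, fun t ht => ?_⟩
  have ht' : t = T + (t - T) := by omega
  have hn : N ≤ t - T := by omega
  rw [Real.norm_eq_abs, abs_of_nonneg (hZ t), ht']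
  calc Z (T + (t - T)) ≤ Z T * P (t - T) + ∑ k ∈ Finset.range (t - T), e (k + T) := key _
    _ < ε/2 + ε/2 := add_lt_add (hN _ hn) (htail _)
    _ = ε := by ring
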